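/- Let b > 0 and define u : ℝ → ℝ by u(s) = √(b² + s²)/b. Then u is twice differentiable and for all s ∈ ℝ: 1/( u(s)²·(1 + u′(s)²) ) = b⁴/( b⁴ + (1 + b²)s² ) and −u″(s)/( u(s)·(1 + u′(s)²)² ) = −b⁶/( b⁴ + (1 + b²)s² )²; moreover, setting K_tan(s) = b⁴/( b⁴ + (1 + b²)s² ) and K_rad(s) = −b⁶/( b⁴ + (1 + b²)s² )², one has −1/b² ≤ K_rad(s)/K_tan(s) < 0 for all s ∈ ℝ. -/

import Mathlib

/-- The profile function `u(s) = √(b² + s²)/b` of the generalized hyperboloid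
is twice differentiable on `ℝ` with
`1/(u²(1+u′²)) = b⁴/(b⁴+(1+b²)s²)` and
`−u″/(u(1+u′²)²) = −b⁶/(b⁴+(1+b²)s²)²`; moreover, for
`K_tan(s) = b⁴/(b⁴+(1+b²)s²)` and `K_rad(s) = −b⁶/(b⁴+(1+b²)s²)²`, one has
`−1/b² ≤ K_rad/K_tan < 0` everywhere. -/
theorem stmt_19 (b : ℝ) (hb : 0 < b)
    (u : ℝ → ℝ) (hu : ∀ s, u s = Real.sqrt (b ^ 2 + s ^ 2) / b)
    (Ktan Krad : ℝ → ℝ)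
    (hKtan : ∀ s, Ktan s = b ^ 4 / (b ^ 4 + (1 + b ^ 2) * s ^ 2))
    (hKrad : ∀ s, Krad s = -b ^ 6 / (b ^ 4 + (1 + b ^ 2) * s ^ 2) ^ 2) :
    ∀ s : ℝ,
      DifferentiableAt ℝ u s ∧
      DifferentiableAt ℝ (deriv u) s ∧
      1 / ((u s) ^ 2 * (1 + (deriv u s) ^ 2))
        = b ^ 4 / (b ^ 4 + (1 + b ^ 2) * s ^ 2) ∧
      -(deriv (deriv u) s) / (u s * (1 + (deriv u s) ^ 2) ^ 2)
        = -b ^ 6 / (b ^ 4 + (1 + b ^ 2) * s ^ 2) ^ 2 ∧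
      -1 / b ^ 2 ≤ Krad s / Ktan s ∧ Krad s / Ktan s < 0 := by
  have hbne : b ≠ 0 := ne_of_gt hb
  have hpos : ∀ t : ℝ, 0 < b ^ 2 + t ^ 2 := fun t => by positivity
  have hsqrtpos : ∀ t : ℝ, 0 < Real.sqrt (b ^ 2 + t ^ 2) := fun t =>
    Real.sqrt_pos.2 (hpos t)
  have huf : u = fun x => Real.sqrt (b ^ 2 + x ^ 2) / b := funext hu
  -- first derivative
  have hder : ∀ t : ℝ, HasDerivAt u (t / (b * Real.sqrt (b ^ 2 + t ^ 2))) t := by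
    intro t
    have h1 : HasDerivAt (fun x : ℝ => b ^ 2 + x ^ 2) (2 * t) t := by
      simpa [mul_comm] using (hasDerivAt_pow 2 t).const_add (b ^ 2)
    have h2 : HasDerivAt (fun x => Real.sqrt (b ^ 2 + x ^ 2))
        (2 * t / (2 * Real.sqrt (b ^ 2 + t ^ 2))) t :=
      h1.sqrt (ne_of_gt (hpos t))
    have h3 : HasDerivAt (fun x => Real.sqrt (b ^ 2 + x ^ 2) / b)
        (2 * t / (2 * Real.sqrt (b ^ 2 + t ^ 2)) / b) t := h2.div_const b
    rw [huf]
    convert h3 using 1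
    have hs : Real.sqrt (b ^ 2 + t ^ 2) ≠ 0 := ne_of_gt (hsqrtpos t)
    rw [mul_div_mul_left _ _ (two_ne_zero : (2:ℝ) ≠ 0), div_div, mul_comm b]
  have hderiv : deriv u = fun t => t / (b * Real.sqrt (b ^ 2 + t ^ 2)) :=
    funext fun t => (hder t).deriv
  intro s
  have hs0 : Real.sqrt (b ^ 2 + s ^ 2) ≠ 0 := ne_of_gt (hsqrtpos s)
  have hsq : Real.sqrt (b ^ 2 + s ^ 2) ^ 2 = b ^ 2 + s ^ 2 :=
    Real.sq_sqrt (hpos s).le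
  -- second derivative
  have hder2 : HasDerivAt (deriv u)
      ((1 * (b * Real.sqrt (b ^ 2 + s ^ 2)) -
        s * (b * (2 * s / (2 * Real.sqrt (b ^ 2 + s ^ 2))))) /
        (b * Real.sqrt (b ^ 2 + s ^ 2)) ^ 2) s := by
    rw [hderiv]
    have h1 : HasDerivAt (fun x : ℝ => b ^ 2 + x ^ 2) (2 * s) s := by
      simpa [mul_comm] using (hasDerivAt_pow 2 s).const_add (b ^ 2)
    have h2 : HasDerivAt (fun x => Real.sqrt (b ^ 2 + x ^ 2))
        (2 * s / (2 * Real.sqrt (b ^ 2 + s ^ 2))) s :=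
      h1.sqrt (ne_of_gt (hpos s))
    have h3 : HasDerivAt (fun x => b * Real.sqrt (b ^ 2 + x ^ 2))
        (b * (2 * s / (2 * Real.sqrt (b ^ 2 + s ^ 2)))) s := h2.const_mul b
    exact (hasDerivAt_id s).div h3 (by positivity)
  have h2 : (deriv u s) ^ 2 = s ^ 2 / (b ^ 2 * (b ^ 2 + s ^ 2)) := by
    rw [hderiv]; simp only; rw [div_pow, mul_pow, hsq]
  have h3 : 1 + (deriv u s) ^ 2
      = (b ^ 4 + (1 + b ^ 2) * s ^ 2) / (b ^ 2 * (b ^ 2 + s ^ 2)) := by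
    rw [h2]; field_simp; ring
  have hnum : 1 * (b * Real.sqrt (b ^ 2 + s ^ 2)) -
      s * (b * (2 * s / (2 * Real.sqrt (b ^ 2 + s ^ 2))))
      = b ^ 3 / Real.sqrt (b ^ 2 + s ^ 2) := by
    rw [eq_div_iff hs0]
    field_simp
    linear_combination hsq
  have hd2 : deriv (deriv u) s = b / ((b ^ 2 + s ^ 2) * Real.sqrt (b ^ 2 + s ^ 2)) := by
    rw [hder2.deriv, hnum, mul_pow, hsq, div_div]
    rw [div_eq_div_iff (by positivity) (by positivity)]
    ring
  have h4 : (0:ℝ) < b ^ 4 + (1 + b ^ 2) * s ^ 2 := by positivity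
  have hratio : Krad s / Ktan s = -b ^ 2 / (b ^ 4 + (1 + b ^ 2) * s ^ 2) := by
    rw [hKrad, hKtan]
    field_simp
  refine ⟨(hder s).differentiableAt, hder2.differentiableAt, ?_, ?_, ?_, ?_⟩
  · rw [hu, h3, div_pow, hsq]
    rw [div_eq_div_iff (by positivity) (by positivity)]
    field_simp
  · rw [hu, h3, hd2]
    rw [div_eq_div_iff (by positivity) (by positivity)]
    field_simp
    ring_nf
    rw [hsq]
    ring
  · rw [hratio, div_le_div_iff₀ (by positivity) h4]
    nlinarith [sq_nonneg s, sq_nonneg (b * s)]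
  · rw [hratio]
    exact div_neg_of_neg_of_pos (neg_lt_zero.mpr (by positivity)) h4
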